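/- arXiv:1811.12605 — 8 statements merged into one kernel-verified Lean document; each statement's English description precedes it below -/
import Mathlib

section
/- Fix integers T ≥ 1 and M ≥ 1, and for t ∈ ℤ let π(t) = max{kT : k ∈ ℤ, kT + M ≤ t} and I(t) = t − π(t). Then for every starting time t₀ ∈ ℤ, the time-averages (1/N)·Σ_{t=t₀}^{t₀+N−1} I(t) converge, as N → ∞, to M + (T − 1)/2 (this is the average-AoI half of the paper's Lemma 2, Λ_a(f) = 𝓜(f) + (𝓣(f) − 1)/2). -/
/-- Sum of `(a + j) % T` over a full period equals the sum `0 + 1 + ... + (T-1)`. -/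
lemma aoi_period_sum (T : ℤ) (hT : 0 < T) :
    ∀ a : ℤ, ∑ j ∈ Finset.range T.toNat, ((a + (j : ℤ)) % T)
      = ∑ j ∈ Finset.range T.toNat, (j : ℤ) := by
  obtain ⟨n, hn⟩ : ∃ n : ℕ, T.toNat = n + 1 := ⟨T.toNat - 1, by omega⟩
  have hTn : (n : ℤ) + 1 = T := by omega
  have step : ∀ a : ℤ, ∑ j ∈ Finset.range T.toNat, ((a + 1 + (j : ℤ)) % T)
      = ∑ j ∈ Finset.range T.toNat, ((a + (j : ℤ)) % T) := by
    intro a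
    rw [hn, Finset.sum_range_succ, Finset.sum_range_succ']
    have h2 : (a + 1 + (n : ℤ)) % T = (a + ((0 : ℕ) : ℤ)) % T := by
      have he : a + 1 + (n : ℤ) = (a + ((0 : ℕ) : ℤ)) + 1 * T := by push_cast; omega
      rw [he, Int.add_mul_emod_self_right]
    have h3 : ∑ j ∈ Finset.range n, ((a + 1 + (j : ℤ)) % T)
        = ∑ j ∈ Finset.range n, ((a + ((j + 1 : ℕ) : ℤ)) % T) := by
      refine Finset.sum_congr rfl fun j _ => ?_
      congr 1; push_cast; ring
    rw [h2, h3]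
  intro a
  induction a using Int.induction_on with
  | zero =>
    refine Finset.sum_congr rfl fun j hj => ?_
    have hj' : (j : ℤ) < T := by
      rw [Finset.mem_range] at hj; omega
    rw [zero_add, Int.emod_eq_of_lt (by positivity) hj']
  | succ k ih => rw [step]; exact ih
  | pred k ih =>
    have h := step (-(k : ℤ) - 1)
    have e : -(k : ℤ) - 1 + 1 = -(k : ℤ) := by ring
    rw [e] at h
    rw [← h]
    exact ih

/-- Average-AoI half of Lemma 2: with `π t = max {k*T : k ∈ ℤ, k*T + M ≤ t}` and
`I t = t - π t`, for every starting time `t₀` the averages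
`(1/N) * ∑_{t = t₀}^{t₀ + N - 1} I t` converge, as `N → ∞`, to `M + (T - 1)/2`. -/
theorem stmt_2 (T M : ℤ) (hT : 1 ≤ T) (hM : 1 ≤ M)
    (π : ℤ → ℤ)
    (hπ : ∀ t : ℤ, IsGreatest {x : ℤ | ∃ k : ℤ, x = k * T ∧ k * T + M ≤ t} (π t))
    (I : ℤ → ℤ) (hI : ∀ t : ℤ, I t = t - π t) :
    ∀ t₀ : ℤ, Filter.Tendsto
      (fun N : ℕ => (∑ j ∈ Finset.range N, (I (t₀ + (j : ℤ)) : ℝ)) / (N : ℝ))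
      Filter.atTop (nhds ((M : ℝ) + ((T : ℝ) - 1) / 2)) := by
  have hT0 : (0 : ℤ) < T := hT
  have hTne : T ≠ 0 := by omega
  -- identify π and I
  have hπ' : ∀ t : ℤ, π t = (t - M) / T * T := by
    intro t
    have hmem : ((t - M) / T * T) ∈ {x : ℤ | ∃ k : ℤ, x = k * T ∧ k * T + M ≤ t} := by
      refine ⟨(t - M) / T, rfl, ?_⟩
      have := Int.ediv_mul_le (t - M) hTne
      omega
    have hub : ∀ x ∈ {x : ℤ | ∃ k : ℤ, x = k * T ∧ k * T + M ≤ t}, x ≤ (t - M) / T * T := by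
      rintro x ⟨k, rfl, hk⟩
      have hk' : k ≤ (t - M) / T := by
        rw [Int.le_ediv_iff_mul_le hT0]; omega
      exact mul_le_mul_of_nonneg_right hk' (by omega)
    exact (hπ t).unique ⟨hmem, hub⟩
  have hI' : ∀ t : ℤ, I t = M + (t - M) % T := by
    intro t
    rw [hI, hπ']
    have h1 := Int.emod_add_mul_ediv (t - M) T
    have h2 : (t - M) / T * T = T * ((t - M) / T) := mul_comm _ _
    omega
  intro t₀
  set b : ℤ := t₀ - M with hb
  set G : ℕ → ℤ := fun N => ∑ j ∈ Finset.range N, ((b + (j : ℤ)) % T) with hG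
  set n : ℕ := T.toNat with hnd
  have hn1 : 1 ≤ n := by omega
  have hnT : (n : ℤ) = T := by omega
  have hS0 : 2 * (∑ j ∈ Finset.range n, (j : ℤ)) = T * (T - 1) := by
    have h := Finset.sum_range_id_mul_two n
    have hcast : ((∑ i ∈ Finset.range n, i : ℕ) : ℤ) = ∑ j ∈ Finset.range n, (j : ℤ) := by
      push_cast; rfl
    calc 2 * (∑ j ∈ Finset.range n, (j : ℤ))
        = (((∑ i ∈ Finset.range n, i) * 2 : ℕ) : ℤ) := by rw [← hcast]; push_cast; ring
      _ = ((n * (n - 1) : ℕ) : ℤ) := by rw [h]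
      _ = (n : ℤ) * ((n : ℤ) - 1) := by
          push_cast [Nat.cast_sub hn1]; ring
      _ = T * (T - 1) := by rw [hnT]
  -- multiples of the period
  have hGmul : ∀ q : ℕ, G (q * n) = q * (∑ j ∈ Finset.range n, (j : ℤ)) := by
    intro q
    induction q with
    | zero => simp [hG]
    | succ q ih =>
      have hqn : (q + 1) * n = q * n + n := by ring
      simp only [hG, hqn]
      rw [Finset.sum_range_add]
      have hper : ∑ j ∈ Finset.range n, ((b + ((q * n + j : ℕ) : ℤ)) % T)
          = ∑ j ∈ Finset.range n, (((b + ((q * n : ℕ) : ℤ)) + (j : ℤ)) % T) := by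
        refine Finset.sum_congr rfl fun j _ => ?_
        congr 1; push_cast; ring
      rw [hper, aoi_period_sum T hT0 (b + ((q * n : ℕ) : ℤ))]
      simp only [hG] at ih
      rw [ih]
      push_cast; ring
  -- key bound
  have key : ∀ N : ℕ, |2 * G N - (N : ℤ) * (T - 1)| ≤ 2 * T * T := by
    intro N
    set q : ℕ := N / n with hq
    set r : ℕ := N % n with hr
    have hNqr : N = q * n + r := by
      rw [hq, hr, Nat.mul_comm]; exact (Nat.div_add_mod N n).symm
    have hrn : r < n := Nat.mod_lt _ (by omega)
    have hsplit : G N = G (q * n) + ∑ j ∈ Finset.range r, ((b + ((q * n + j : ℕ) : ℤ)) % T) := by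
      simp only [hG]; rw [hNqr]; exact Finset.sum_range_add _ _ _
    set tail : ℤ := ∑ j ∈ Finset.range r, ((b + ((q * n + j : ℕ) : ℤ)) % T) with htail
    have htail0 : 0 ≤ tail := Finset.sum_nonneg fun j _ => Int.emod_nonneg _ hTne
    have htail1 : tail ≤ (r : ℤ) * (T - 1) := by
      calc tail ≤ ∑ _j ∈ Finset.range r, (T - 1) :=
            Finset.sum_le_sum fun j _ => by
              have := Int.emod_lt_of_pos (b + ((q * n + j : ℕ) : ℤ)) hT0
              omega
        _ = (r : ℤ) * (T - 1) := by simp [mul_comm]; ring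
    have hq2 : 2 * ((q : ℤ) * (∑ j ∈ Finset.range n, (j : ℤ))) = (q : ℤ) * (T * (T - 1)) := by
      rw [← hS0]; ring
    have h2G : 2 * G N = (q : ℤ) * (T * (T - 1)) + 2 * tail := by
      rw [hsplit, hGmul q]; linarith
    have hNz : (N : ℤ) = (q : ℤ) * T + (r : ℤ) := by
      have h' : (N : ℤ) = (q : ℤ) * (n : ℤ) + (r : ℤ) := by exact_mod_cast hNqr
      rw [hnT] at h'; exact h'
    have hN : (N : ℤ) * (T - 1) = (q : ℤ) * (T * (T - 1)) + (r : ℤ) * (T - 1) := by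
      rw [hNz]; ring
    have hrT : (r : ℤ) * (T - 1) ≤ T * T := by
      have hr' : (r : ℤ) ≤ T := by omega
      have hr0 : (0 : ℤ) ≤ (r : ℤ) := by positivity
      nlinarith
    have hTT : (0 : ℤ) ≤ T * T := mul_nonneg (by omega) (by omega)
    rw [abs_le]
    constructor <;> nlinarith
  -- integer-level sum identity
  have hZ : ∀ N : ℕ, ∑ j ∈ Finset.range N, I (t₀ + (j : ℤ)) = (N : ℤ) * M + G N := by
    intro N
    induction N with
    | zero => simp [hG]
    | succ N ihN =>
      rw [Finset.sum_range_succ, ihN, hI']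
      simp only [hG, Finset.sum_range_succ]
      have he : t₀ + (N : ℤ) - M = b + (N : ℤ) := by rw [hb]; ring
      rw [he]
      push_cast; ring
  have hfun : ∀ N : ℕ, (∑ j ∈ Finset.range N, (I (t₀ + (j : ℤ)) : ℝ))
      = (N : ℝ) * M + (G N : ℝ) := by
    intro N
    have h := congrArg (fun z : ℤ => (z : ℝ)) (hZ N)
    push_cast at h
    exact h
  -- limit of G N / N
  have hGlim : Filter.Tendsto (fun N : ℕ => (G N : ℝ) / N - ((T : ℝ) - 1) / 2)
      Filter.atTop (nhds 0) := by
    refine squeeze_zero_norm' ?_ (tendsto_const_div_atTop_nhds_zero_nat ((T : ℝ) * T))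
    filter_upwards [Filter.eventually_atTop.2 ⟨1, fun N hN => hN⟩] with N hN
    have hN0 : (0 : ℝ) < N := by exact_mod_cast hN
    have hR : |2 * (G N : ℝ) - (N : ℝ) * ((T : ℝ) - 1)| ≤ 2 * T * T := by
      exact_mod_cast key N
    rw [Real.norm_eq_abs]
    have heq : (G N : ℝ) / N - ((T : ℝ) - 1) / 2
        = (2 * (G N : ℝ) - (N : ℝ) * ((T : ℝ) - 1)) / (2 * N) := by
      field_simp
    rw [heq, abs_div, abs_of_pos (by positivity : (0 : ℝ) < 2 * N)]
    calc |2 * (G N : ℝ) - (N : ℝ) * ((T : ℝ) - 1)| / (2 * N) ≤ (2 * T * T) / (2 * N) := by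
          gcongr
      _ = (T : ℝ) * T / N := by field_simp
  have hGlim' : Filter.Tendsto (fun N : ℕ => (G N : ℝ) / N)
      Filter.atTop (nhds (((T : ℝ) - 1) / 2)) := by
    have := hGlim.add (tendsto_const_nhds (x := ((T : ℝ) - 1) / 2) (f := Filter.atTop))
    simpa using this
  have hmain : Filter.Tendsto (fun N : ℕ => (M : ℝ) + (G N : ℝ) / N)
      Filter.atTop (nhds ((M : ℝ) + ((T : ℝ) - 1) / 2)) :=
    Filter.Tendsto.const_add _ hGlim'
  refine hmain.congr' ?_
  filter_upwards [Filter.eventually_atTop.2 ⟨1, fun N hN => hN⟩] with N hN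
  have hN0 : (0 : ℝ) < N := by exact_mod_cast hN
  rw [hfun N]
  field_simp
end

section
/- Let S be a nonempty finite set of integers with T_min ≤ T ≤ T_max for all T ∈ S, and let M : S → ℝ; set Λ_a(T) = M(T) + (T − 1)/2. If T_a ∈ S minimizes Λ_a over S and T_m ∈ S minimizes M over S, then T_a ≤ T_m. (In throughput language this is the second half of the paper's Lemma 3: every average-AoI-optimal throughput R_a satisfies R_a ≥ R_m for every maximum-delay-optimal throughput R_m, i.e., min R_a ≥ max R_m.) -/
/-- Second half of Lemma 3 (in period language): if `T_a` minimizes the average AoI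
`Λ_a T = M T + (T - 1)/2` over `S` and `T_m` minimizes the maximum delay `M` over `S`,
then `T_a ≤ T_m`. -/
theorem stmt_4 (Tmin Tmax : ℤ) (S : Finset ℤ) (hS : S.Nonempty)
    (hrange : ∀ T ∈ S, Tmin ≤ T ∧ T ≤ Tmax)
    (M : ℤ → ℝ) (Ta Tm : ℤ) (hTa : Ta ∈ S) (hTm : Tm ∈ S)
    (hTaopt : ∀ T ∈ S, M Ta + ((Ta : ℝ) - 1) / 2 ≤ M T + ((T : ℝ) - 1) / 2)
    (hTmopt : ∀ T ∈ S, M Tm ≤ M T) :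
    Ta ≤ Tm := by
  have h1 := hTaopt Tm hTm
  have h2 := hTmopt Ta hTa
  have : (Ta : ℝ) ≤ Tm := by linarith
  exact_mod_cast this
end

section
/- Let S be a nonempty finite set of integers with T_min ≤ T ≤ T_max for all T ∈ S, and let M : S → ℝ; set Λ_p(T) = M(T) + T − 1 and Λ_a(T) = M(T) + (T − 1)/2. If T_p ∈ S minimizes Λ_p over S and T_a ∈ S minimizes Λ_a over S, then T_p ≤ T_a. (In throughput language this is part 1 of the paper's Lemma 5: every peak-AoI-optimal throughput R_p satisfies R_p ≥ R_a for every average-AoI-optimal throughput R_a, i.e., min R_p ≥ max R_a.) -/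
/-- Part 1 of Lemma 5 (period comparison): if `T_p` minimizes the peak AoI
`Λ_p T = M T + T - 1` over `S` and `T_a` minimizes the average AoI
`Λ_a T = M T + (T - 1)/2` over `S`, then `T_p ≤ T_a`. -/
theorem stmt_7 (Tmin Tmax : ℤ) (S : Finset ℤ) (hS : S.Nonempty)
    (hrange : ∀ T ∈ S, Tmin ≤ T ∧ T ≤ Tmax)
    (M : ℤ → ℝ) (Tp Ta : ℤ) (hTp : Tp ∈ S) (hTa : Ta ∈ S)
    (hTpopt : ∀ T ∈ S, M Tp + (Tp : ℝ) - 1 ≤ M T + (T : ℝ) - 1)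
    (hTaopt : ∀ T ∈ S, M Ta + ((Ta : ℝ) - 1) / 2 ≤ M T + ((T : ℝ) - 1) / 2) :
    Tp ≤ Ta := by
  have h1 := hTpopt Ta hTa
  have h2 := hTaopt Tp hTp
  have : (Tp : ℝ) ≤ Ta := by linarith
  exact_mod_cast this
end

section
/- Let S be a nonempty finite set of integers with T_min ≤ T ≤ T_max for all T ∈ S, and let M : S → ℝ; set Λ_p(T) = M(T) + T − 1 and Λ_a(T) = M(T) + (T − 1)/2. If T_p ∈ S minimizes Λ_p over S and T_a ∈ S minimizes Λ_a over S, then M(T_p) ≥ M(T_a). (This is the maximum-delay comparison in part 1 of the paper's Lemma 5: the maximum delay achieved by the peak-AoI-optimal solution is at least that achieved by the average-AoI-optimal solution.) -/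
/-- Part 1 of Lemma 5 (maximum-delay comparison): if `T_p` minimizes the peak AoI
`Λ_p T = M T + T - 1` over `S` and `T_a` minimizes the average AoI
`Λ_a T = M T + (T - 1)/2` over `S`, then `M T_p ≥ M T_a`. -/
theorem stmt_8 (Tmin Tmax : ℤ) (S : Finset ℤ) (hS : S.Nonempty)
    (hrange : ∀ T ∈ S, Tmin ≤ T ∧ T ≤ Tmax)
    (M : ℤ → ℝ) (Tp Ta : ℤ) (hTp : Tp ∈ S) (hTa : Ta ∈ S)
    (hTpopt : ∀ T ∈ S, M Tp + (Tp : ℝ) - 1 ≤ M T + (T : ℝ) - 1)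
    (hTaopt : ∀ T ∈ S, M Ta + ((Ta : ℝ) - 1) / 2 ≤ M T + ((T : ℝ) - 1) / 2) :
    M Ta ≤ M Tp := by
  have h1 := hTpopt Ta hTa
  have h2 := hTaopt Tp hTp
  linarith
end

section
/- Let S be a nonempty finite set of integers with T_min ≤ T ≤ T_max for all T ∈ S, and let M : S → ℝ; set Λ_p(T) = M(T) + T − 1 and Λ_a(T) = M(T) + (T − 1)/2. If T_p ∈ S minimizes Λ_p over S and T_a ∈ S minimizes Λ_a over S, then Λ_a(T_p) − Λ_a(T_a) ≤ (T_max − T_min)/2. (This is gap (9) of the paper's Lemma 5: the average AoI at any peak-AoI-optimal throughput exceeds the optimal average AoI by at most D/(2R_l) − D/(2R_u).) -/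
/-- Gap (9) of Lemma 5: if `T_p` minimizes the peak AoI `Λ_p T = M T + T - 1` over `S`
and `T_a` minimizes the average AoI `Λ_a T = M T + (T - 1)/2` over `S`, then
`Λ_a T_p - Λ_a T_a ≤ (T_max - T_min)/2`. -/
theorem stmt_9 (Tmin Tmax : ℤ) (S : Finset ℤ) (hS : S.Nonempty)
    (hrange : ∀ T ∈ S, Tmin ≤ T ∧ T ≤ Tmax)
    (M : ℤ → ℝ) (Tp Ta : ℤ) (hTp : Tp ∈ S) (hTa : Ta ∈ S)
    (hTpopt : ∀ T ∈ S, M Tp + (Tp : ℝ) - 1 ≤ M T + (T : ℝ) - 1)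
    (hTaopt : ∀ T ∈ S, M Ta + ((Ta : ℝ) - 1) / 2 ≤ M T + ((T : ℝ) - 1) / 2) :
    (M Tp + ((Tp : ℝ) - 1) / 2) - (M Ta + ((Ta : ℝ) - 1) / 2)
      ≤ ((Tmax : ℝ) - (Tmin : ℝ)) / 2 := by
  have h1 := hTpopt Ta hTa
  have h2 := hrange Ta hTa
  have h3 := hrange Tp hTp
  have hTaR : (Ta : ℝ) ≤ (Tmax : ℝ) := by exact_mod_cast h2.2
  have hTpR : (Tmin : ℝ) ≤ (Tp : ℝ) := by exact_mod_cast h3.1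
  linarith
end

section
/- Let S be a nonempty finite set of integers with T_min ≤ T ≤ T_max for all T ∈ S, and let M : S → ℤ be integer-valued (since all link delays and task activation periods are integers in the slotted transmission model, the minimal maximum delay is an integer); set Λ_p(T) = M(T) + T − 1 and Λ_a(T) = M(T) + (T − 1)/2. If T_p ∈ S minimizes Λ_p over S and T_a ∈ S minimizes Λ_a over S, then Λ_p(T_a) − Λ_p(T_p) ≤ ⌊(T_max − T_min)/2⌋. (This is gap (10) of the paper's Lemma 5: the peak AoI at any average-AoI-optimal throughput exceeds the optimal peak AoI by at most ⌊D/(2R_l) − D/(2R_u)⌋.) -/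
/-- Gap (10) of Lemma 5: with an integer-valued minimal maximum delay `M : S → ℤ`,
if `T_p` minimizes the peak AoI `Λ_p T = M T + T - 1` over `S` and `T_a` minimizes
the average AoI `Λ_a T = M T + (T - 1)/2` over `S`, then
`Λ_p T_a - Λ_p T_p ≤ ⌊(T_max - T_min)/2⌋`. -/
theorem stmt_10 (Tmin Tmax : ℤ) (S : Finset ℤ) (hS : S.Nonempty)
    (hrange : ∀ T ∈ S, Tmin ≤ T ∧ T ≤ Tmax)
    (M : ℤ → ℤ) (Tp Ta : ℤ) (hTp : Tp ∈ S) (hTa : Ta ∈ S)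
    (hTpopt : ∀ T ∈ S, M Tp + Tp - 1 ≤ M T + T - 1)
    (hTaopt : ∀ T ∈ S,
      (M Ta : ℝ) + ((Ta : ℝ) - 1) / 2 ≤ (M T : ℝ) + ((T : ℝ) - 1) / 2) :
    (M Ta + Ta - 1) - (M Tp + Tp - 1) ≤ ⌊((Tmax : ℝ) - (Tmin : ℝ)) / 2⌋ := by
  have h1 := hTaopt Tp hTp
  have h2 := hrange Ta hTa
  have h3 := hrange Tp hTp
  rw [Int.le_floor]
  push_cast
  have c1 : (Tmin:ℝ) ≤ Tp := by exact_mod_cast h3.1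
  have c2 : (Ta:ℝ) ≤ Tmax := by exact_mod_cast h2.2
  linarith
end

section
/- Let α ≥ 1 be a real number, let T_min, T_max, T* be integers with 1 ≤ T_min ≤ T* ≤ T_max, and let M*, M_α be real numbers with M* ≥ 1 and M_α ≤ α·M* + T_max − 1. Then M_α + T_max − 1 ≤ (α + 2·T_max/T_min)·(M* + T* − 1). (This is the arithmetic core of the peak-AoI case of the paper's Theorem 2: since the solution returned by the framework run at throughput R_l has peak AoI M_α + D/R_l − 1 while the optimal peak AoI is M* + T* − 1, and since the α-approximation guarantee yields M_α ≤ α·M* + D/R_l − 1, the framework's solution is an (α + 2R_u/R_l)-approximation for minimizing peak AoI, where R_u/R_l = T_max/T_min.) -/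
/-- Arithmetic core of the peak-AoI case of Theorem 2: if `α ≥ 1`,
`1 ≤ T_min ≤ T* ≤ T_max` are integers, `M* ≥ 1`, and
`M_α ≤ α * M* + T_max - 1`, then
`M_α + T_max - 1 ≤ (α + 2 * T_max / T_min) * (M* + T* - 1)`. -/
theorem stmt_11 (α : ℝ) (hα : 1 ≤ α) (Tmin Tmax Tstar : ℤ)
    (h1 : 1 ≤ Tmin) (h2 : Tmin ≤ Tstar) (h3 : Tstar ≤ Tmax)
    (Mstar Mα : ℝ) (hMstar : 1 ≤ Mstar)
    (hMα : Mα ≤ α * Mstar + (Tmax : ℝ) - 1) :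
    Mα + (Tmax : ℝ) - 1
      ≤ (α + 2 * (Tmax : ℝ) / (Tmin : ℝ)) * (Mstar + (Tstar : ℝ) - 1) := by
  have h1' : (1 : ℝ) ≤ (Tmin : ℝ) := by exact_mod_cast h1
  have h2' : (Tmin : ℝ) ≤ (Tstar : ℝ) := by exact_mod_cast h2
  have h3' : (Tstar : ℝ) ≤ (Tmax : ℝ) := by exact_mod_cast h3
  have hpos : (0 : ℝ) < (Tmin : ℝ) := by linarith
  have hX : (Tmin : ℝ) ≤ Mstar + (Tstar : ℝ) - 1 := by linarith
  have key : 2 * (Tmax : ℝ) ≤ 2 * (Tmax : ℝ) / (Tmin : ℝ) * (Mstar + (Tstar : ℝ) - 1) := by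
    rw [div_mul_eq_mul_div, le_div_iff₀ hpos]
    nlinarith
  nlinarith [mul_le_mul_of_nonneg_left (show Mstar ≤ Mstar + (Tstar:ℝ) - 1 by linarith) (by linarith : (0:ℝ) ≤ α)]
end

section
/- Let α ≥ 1 be a real number, let T_min, T_max, T* be integers with 1 ≤ T_min ≤ T* ≤ T_max, and let M*, M_α be real numbers with M* ≥ 1 and M_α ≤ α·M* + T_max − 1. Then M_α + (T_max − 1)/2 ≤ (α + 3·T_max/T_min)·(M* + (T* − 1)/2). (This is the arithmetic core of the average-AoI case of the paper's Theorem 2: since the framework's solution has average AoI M_α + (D/R_l − 1)/2 while the optimal average AoI is M* + (T* − 1)/2, the framework's solution is an (α + 3R_u/R_l)-approximation for minimizing average AoI, where R_u/R_l = T_max/T_min.) -/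
/-- Arithmetic core of the average-AoI case of Theorem 2: if `α ≥ 1`,
`1 ≤ T_min ≤ T* ≤ T_max` are integers, `M* ≥ 1`, and
`M_α ≤ α * M* + T_max - 1`, then
`M_α + (T_max - 1)/2 ≤ (α + 3 * T_max / T_min) * (M* + (T* - 1)/2)`. -/
theorem stmt_12 (α : ℝ) (hα : 1 ≤ α) (Tmin Tmax Tstar : ℤ)
    (h1 : 1 ≤ Tmin) (h2 : Tmin ≤ Tstar) (h3 : Tstar ≤ Tmax)
    (Mstar Mα : ℝ) (hMstar : 1 ≤ Mstar)
    (hMα : Mα ≤ α * Mstar + (Tmax : ℝ) - 1) :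
    Mα + ((Tmax : ℝ) - 1) / 2
      ≤ (α + 3 * (Tmax : ℝ) / (Tmin : ℝ)) * (Mstar + ((Tstar : ℝ) - 1) / 2) := by
  have h1' : (1:ℝ) ≤ (Tmin:ℝ) := by exact_mod_cast h1
  have h2' : (Tmin:ℝ) ≤ (Tstar:ℝ) := by exact_mod_cast h2
  have h3' : (Tstar:ℝ) ≤ (Tmax:ℝ) := by exact_mod_cast h3
  have hpos : (0:ℝ) < (Tmin:ℝ) := by linarith
  have hc : 3 * (Tmax:ℝ) / (Tmin:ℝ) * (Tmin:ℝ) = 3 * (Tmax:ℝ) := by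
    field_simp
  have hge : (3:ℝ) ≤ 3 * (Tmax:ℝ) / (Tmin:ℝ) := by
    rw [← sub_nonneg]
    have : 3 * (Tmax:ℝ) / (Tmin:ℝ) - 3 = (3 * ((Tmax:ℝ) - (Tmin:ℝ))) / (Tmin:ℝ) := by
      field_simp
    rw [this]
    apply div_nonneg <;> linarith
  nlinarith [mul_le_mul_of_nonneg_left (show (Tmin:ℝ)/2 ≤ Mstar + ((Tstar:ℝ)-1)/2 by linarith)
      (show (0:ℝ) ≤ 3*(Tmax:ℝ)/(Tmin:ℝ) by linarith), hc,
    mul_le_mul_of_nonneg_right hα (show (0:ℝ) ≤ ((Tstar:ℝ)-1)/2 by linarith)]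
end
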